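/- Let R be a G-graded simple algebra (R² ≠ 0 and the only homogeneous two-sided ideals are 0 and R) possessing a minimal graded left ideal I. Then every graded simple left R-module V is isomorphic, as a graded R-module, to a shift I^{[g]} of I for some g ∈ G. -/

import Mathlib

open DirectSum

section Helpers

variable {G : Type*} [DecidableEq G] {M : Type*} [AddCommGroup M]
  (ℳ : G → AddSubgroup M) [DirectSum.Decomposition ℳ]

/-- Components of elements of a homogeneous subgroup lie in the subgroup. -/
theorem aux_comp_mem {S : AddSubgroup M} (hS : S = ⨆ g, S ⊓ ℳ g) {x : M} (hx : x ∈ S) (g : G) :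
    (DirectSum.decompose ℳ x g : M) ∈ S := by
  rw [hS] at hx
  refine AddSubgroup.iSup_induction (C := fun y => (DirectSum.decompose ℳ y g : M) ∈ S)
    _ hx (fun i y hy => ?_) (by simpa using zero_mem S) (fun y z hy hz => by
      simp only [DirectSum.decompose_add, DirectSum.add_apply, AddSubgroup.coe_add]
      exact add_mem hy hz)
  obtain ⟨hyS, hyi⟩ := hy
  by_cases hgi : i = g
  · subst hgi; rw [DirectSum.decompose_of_mem_same ℳ hyi]; exact hyS
  · rw [DirectSum.decompose_of_mem_ne ℳ hyi hgi]; exact zero_mem S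

/-- A subgroup closed under taking components is homogeneous. -/
theorem aux_hom_of_comp {S : AddSubgroup M}
    (h : ∀ x ∈ S, ∀ g, (DirectSum.decompose ℳ x g : M) ∈ S) :
    S = ⨆ g, S ⊓ ℳ g := by
  classical
  refine le_antisymm (fun x hx => ?_) (iSup_le fun g => inf_le_left)
  rw [← DirectSum.sum_support_decompose ℳ x]
  exact sum_mem fun g _ =>
    AddSubgroup.mem_iSup_of_mem g ⟨h x hx g, (DirectSum.decompose ℳ x g).2⟩

end Helpers

section Helpers2

variable {G : Type*} [Group G] [DecidableEq G] {R : Type*} [Ring R]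
  {V : Type*} [AddCommGroup V] [Module R V]
  (ℛ : G → AddSubgroup R) [DirectSum.Decomposition ℛ]
  (𝒱 : G → AddSubgroup V) [DirectSum.Decomposition 𝒱]

theorem aux_decompose_smul
    (hsmul : ∀ (g h : G) (r : R) (v : V), r ∈ ℛ g → v ∈ 𝒱 h → r • v ∈ 𝒱 (g * h))
    {h : G} {w : V} (hw : w ∈ 𝒱 h) (i : R) (g : G) :
    (DirectSum.decompose 𝒱 (i • w) g : V) = (DirectSum.decompose ℛ i (g * h⁻¹) : R) • w := by
  induction i using DirectSum.Decomposition.inductionOn ℛ with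
  | zero => simp
  | @homogeneous m r =>
    have hr : (r : R) ∈ ℛ m := r.2
    have hrw : (r : R) • w ∈ 𝒱 (m * h) := hsmul m h _ w hr hw
    by_cases hg : g = m * h
    · subst hg
      rw [DirectSum.decompose_of_mem_same 𝒱 hrw]
      have : m * h * h⁻¹ = m := by group
      rw [this, DirectSum.decompose_of_mem_same ℛ hr]
    · have h1 : m * h ≠ g := fun hc => hg hc.symm
      rw [DirectSum.decompose_of_mem_ne 𝒱 hrw h1]
      have h2 : m ≠ g * h⁻¹ := by
        intro hc; apply hg; rw [hc]; group
      rw [DirectSum.decompose_of_mem_ne ℛ hr h2, zero_smul]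
  | add x y hx hy =>
    rw [add_smul, DirectSum.decompose_add, DirectSum.decompose_add,
      DirectSum.add_apply, DirectSum.add_apply]
    push_cast
    rw [hx, hy, add_smul]

end Helpers2

/-- If `R` is a graded simple algebra (`R² ≠ 0` and the only homogeneous
two-sided ideals are `0` and `R`) with a minimal graded left ideal `I`, then every graded
simple left `R`-module is isomorphic, as a graded module, to a shift `I^{[g]}` of `I`. -/
theorem graded_simple_module_iso_shift_of_minimal_ideal
    {G : Type*} [Group G] [DecidableEq G] {R : Type*} [Ring R]
    (ℛ : G → AddSubgroup R) [DirectSum.Decomposition ℛ]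
    (hmul : ∀ (g h : G) (a b : R), a ∈ ℛ g → b ∈ ℛ h → a * b ∈ ℛ (g * h))
    -- R is graded simple: R² ≠ 0 ...
    (hR2 : ∃ a b : R, a * b ≠ 0)
    -- ... and the only homogeneous two-sided ideals are 0 and R
    (hsimple : ∀ S : AddSubgroup R, (∀ r x, x ∈ S → r * x ∈ S) → (∀ r x, x ∈ S → x * r ∈ S) →
      S = ⨆ g : G, (S ⊓ ℛ g) → S = ⊥ ∨ S = ⊤)
    -- I is a minimal graded left ideal
    (I : Submodule R R)
    (hIhom : I.toAddSubgroup = ⨆ g : G, (I.toAddSubgroup ⊓ ℛ g))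
    (hIne : I ≠ ⊥)
    (hImin : ∀ J : Submodule R R, J.toAddSubgroup = ⨆ g : G, (J.toAddSubgroup ⊓ ℛ g) →
      J ≤ I → J = ⊥ ∨ J = I)
    -- V is a graded left R-module
    {V : Type*} [AddCommGroup V] [Module R V]
    (𝒱 : G → AddSubgroup V) [DirectSum.Decomposition 𝒱]
    (hsmul : ∀ (g h : G) (r : R) (v : V), r ∈ ℛ g → v ∈ 𝒱 h → r • v ∈ 𝒱 (g * h))
    -- V is graded simple: RV ≠ 0 and no proper nonzero graded submodules
    (hRV : ∃ (r : R) (v : V), r • v ≠ 0)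
    (hVsimple : ∀ U : Submodule R V, U.toAddSubgroup = ⨆ g : G, (U.toAddSubgroup ⊓ 𝒱 g) →
      U = ⊥ ∨ U = ⊤) :
    -- conclusion: V ≅ I^{[g]} as graded R-modules for some g
    ∃ (g : G) (φ : V ≃ₗ[R] I),
      ∀ (k : G) (v : V), v ∈ 𝒱 k → (φ v : R) ∈ ℛ (k * g⁻¹) := by
  classical
  -- the annihilator of V as an additive subgroup
  set A : AddSubgroup R :=
    { carrier := {r : R | ∀ v : V, r • v = 0}
      add_mem' := fun {x y} hx hy v => by rw [add_smul, hx v, hy v, add_zero]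
      zero_mem' := fun v => zero_smul R v
      neg_mem' := fun {x} hx v => by rw [neg_smul, hx v, neg_zero] } with hAdef
  have hAmem : ∀ r : R, r ∈ A ↔ ∀ v : V, r • v = 0 := fun r => Iff.rfl
  have hAleft : ∀ r x : R, x ∈ A → r * x ∈ A := fun r x hx v => by
    rw [mul_smul, hx v, smul_zero]
  have hAright : ∀ r x : R, x ∈ A → x * r ∈ A := fun r x hx v => by
    rw [mul_smul]; exact hx _
  have hAhom : A = ⨆ g : G, (A ⊓ ℛ g) := by
    refine aux_hom_of_comp ℛ (fun x hx g => ?_)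
    rw [hAmem]
    have hhom : ∀ (h : G) (v : V), v ∈ 𝒱 h → (DirectSum.decompose ℛ x g : R) • v = 0 := by
      intro h v hv
      have := aux_decompose_smul ℛ 𝒱 hsmul hv x (g * h)
      rw [hx v] at this
      have hgh : g * h * h⁻¹ = g := by group
      rw [hgh] at this
      rw [← this]
      simp
    intro v
    induction v using DirectSum.Decomposition.inductionOn 𝒱 with
    | zero => exact smul_zero _
    | @homogeneous m u => exact hhom m u u.2
    | add u u' hu hu' => rw [smul_add, hu, hu', add_zero]
  have hAbot : A = ⊥ := by
    rcases hsimple A hAleft hAright hAhom with hb | ht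
    · exact hb
    · exfalso
      obtain ⟨r, v, hrv⟩ := hRV
      exact hrv ((hAmem r).mp (ht ▸ AddSubgroup.mem_top r) v)
  -- a nonzero homogeneous action element
  obtain ⟨a, haI, ha0⟩ := Submodule.exists_mem_ne_zero_of_ne_bot hIne
  have haA : a ∉ A := fun hc => ha0 (by simpa [hAbot] using hc)
  have : ∃ v : V, a • v ≠ 0 := by
    by_contra hc; push_neg at hc; exact haA ((hAmem a).mpr hc)
  obtain ⟨v0, hav0⟩ := this
  have : ∃ h : G, a • (DirectSum.decompose 𝒱 v0 h : V) ≠ 0 := by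
    by_contra hc; push_neg at hc
    apply hav0
    conv_lhs => rw [← DirectSum.sum_support_decompose 𝒱 v0]
    rw [Finset.smul_sum]
    exact Finset.sum_eq_zero fun h _ => hc h
  obtain ⟨h, haw⟩ := this
  set w : V := (DirectSum.decompose 𝒱 v0 h : V) with hwdef
  have hw : w ∈ 𝒱 h := (DirectSum.decompose 𝒱 v0 h).2
  -- the map r ↦ r • w
  set f : R →ₗ[R] V := LinearMap.toSpanSingleton R V w with hfdef
  have hfapp : ∀ r : R, f r = r • w := fun r => rfl
  -- U = I • w is a nonzero graded submodule of V, hence ⊤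
  set U : Submodule R V := Submodule.map f I with hUdef
  have hUhom : U.toAddSubgroup = ⨆ g : G, (U.toAddSubgroup ⊓ 𝒱 g) := by
    refine aux_hom_of_comp 𝒱 (fun u hu g => ?_)
    rw [Submodule.mem_toAddSubgroup] at hu ⊢
    obtain ⟨i, hi, rfl⟩ := hu
    rw [hfapp, aux_decompose_smul ℛ 𝒱 hsmul hw i g]
    exact ⟨(DirectSum.decompose ℛ i (g * h⁻¹) : R),
      aux_comp_mem ℛ hIhom ((I.mem_toAddSubgroup).mpr hi) (g * h⁻¹), rfl⟩
  have hUtop : U = ⊤ := by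
    rcases hVsimple U hUhom with hb | ht
    · exfalso
      apply haw
      have : a • w ∈ U := ⟨a, haI, rfl⟩
      simpa [hb] using this
    · exact ht
  -- the kernel K = {r ∈ I | r • w = 0} is a graded left ideal ≤ I, hence ⊥
  set K : Submodule R R := I ⊓ LinearMap.ker f with hKdef
  have hKhom : K.toAddSubgroup = ⨆ g : G, (K.toAddSubgroup ⊓ ℛ g) := by
    refine aux_hom_of_comp ℛ (fun x hx g => ?_)
    rw [Submodule.mem_toAddSubgroup] at hx ⊢
    obtain ⟨hxI, hxK⟩ := hx
    refine ⟨aux_comp_mem ℛ hIhom ((I.mem_toAddSubgroup).mpr hxI) g, ?_⟩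
    simp only [SetLike.mem_coe, LinearMap.mem_ker] at hxK ⊢
    rw [hfapp] at hxK ⊢
    have hsm := aux_decompose_smul ℛ 𝒱 hsmul hw x (g * h)
    rw [show g * h * h⁻¹ = g by group] at hsm
    rw [← hsm, hxK]
    simp
  have hKbot : K = ⊥ := by
    rcases hImin K hKhom inf_le_left with hb | hI
    · exact hb
    · exfalso
      apply haw
      have : a ∈ K := hI ▸ haI
      exact this.2
  -- f restricted to I is a graded isomorphism I ≅ V
  set φI : ↥I →ₗ[R] V := f.domRestrict I with hφdef
  have hinj : Function.Injective φI := by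
    intro x y hxy
    have hmem : ((x - y : ↥I) : R) ∈ K := by
      refine ⟨(x - y).2, ?_⟩
      simp only [SetLike.mem_coe, LinearMap.mem_ker]
      show f ((x : R) - (y : R)) = 0
      rw [map_sub, show f (x : R) = φI x from rfl, show f (y : R) = φI y from rfl, hxy,
        sub_self]
    rw [hKbot] at hmem
    have : (x : R) - (y : R) = 0 := hmem
    exact Subtype.ext (sub_eq_zero.mp this)
  have hsurj : Function.Surjective φI := by
    intro v
    have : v ∈ U := hUtop ▸ Submodule.mem_top
    obtain ⟨i, hi, hfi⟩ := this
    exact ⟨⟨i, hi⟩, hfi⟩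
  set e : ↥I ≃ₗ[R] V := LinearEquiv.ofBijective φI ⟨hinj, hsurj⟩ with hedef
  refine ⟨h, e.symm, fun k v hv => ?_⟩
  set i : ↥I := e.symm v with hidef
  have hiv : (i : R) • w = v := by
    have h1 : e i = v := e.apply_symm_apply v
    rw [← h1]; rfl
  -- all components of i other than the one in degree k * h⁻¹ vanish
  have hcomp : ∀ m : G, m ≠ k * h⁻¹ → (DirectSum.decompose ℛ (i : R) m : R) = 0 := by
    intro m hm
    have hcI : (DirectSum.decompose ℛ (i : R) m : R) ∈ I :=
      aux_comp_mem ℛ hIhom ((I.mem_toAddSubgroup).mpr i.2) m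
    have hcw : (DirectSum.decompose ℛ (i : R) m : R) • w = 0 := by
      have hsm := aux_decompose_smul ℛ 𝒱 hsmul hw (i : R) (m * h)
      rw [show m * h * h⁻¹ = m by group] at hsm
      rw [← hsm, hiv]
      refine DirectSum.decompose_of_mem_ne 𝒱 hv ?_
      intro hc
      apply hm
      rw [hc]; group
    have : (DirectSum.decompose ℛ (i : R) m : R) ∈ K := ⟨hcI, hcw⟩
    rw [hKbot] at this
    exact this
  have : (i : R) ∈ ℛ (k * h⁻¹) := by
    rw [← DirectSum.sum_support_decompose ℛ (i : R)]
    refine sum_mem fun m _ => ?_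
    by_cases hm : m = k * h⁻¹
    · rw [← hm]; exact (DirectSum.decompose ℛ (i : R) m).2
    · rw [hcomp m hm]; exact zero_mem _
  exact this
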